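/- Let Ī ∈ ℝ^n satisfy Ī_i > 0 for all i and the equilibrium equation (F + V)·Ī = diag(Ī)·M·Ī (equivalently G(Ī) = 0 with Ī below N̄). Then the Jacobian at Ī satisfies DX(Ī)·Ī = −diag(M·Ī)·Ī, and every component of this vector is strictly negative, i.e., (DX(Ī)·Ī)_i = −(M·Ī)_i·Ī_i < 0 for all i. -/

import Mathlib

open Matrix Filter

noncomputable section

/-- The spectral radius of a real square matrix: the supremum of the norms of its
complex eigenvalues. -/
def specRad {n : ℕ} (A : Matrix (Fin n) (Fin n) ℝ) : ℝ :=
  sSup {r : ℝ | ∃ μ ∈ spectrum ℂ (A.map (Complex.ofReal)), ‖μ‖ = r}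

/-- Irreducibility of a square matrix: no proper nonempty subset of indices is
invariant, i.e. from every such subset there is a nonzero entry leading outside of it. -/
def MatIrred {n : ℕ} (A : Matrix (Fin n) (Fin n) ℝ) : Prop :=
  ∀ S : Set (Fin n), S.Nonempty → S ≠ Set.univ → ∃ i ∈ S, ∃ j ∈ Sᶜ, A i j ≠ 0

/-- N̄ᵢ = bᵢ/dᵢ, the asymptotic population of patch i. -/
def Nbar {n : ℕ} (b d : Fin n → ℝ) : Fin n → ℝ := fun i => b i / d i

/-- Ñⱼ = ∑ₖ p_{kj} N̄ₖ, the effective population of patch j. -/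
def Ntil {n : ℕ} (P : Matrix (Fin n) (Fin n) ℝ) (b d : Fin n → ℝ) : Fin n → ℝ :=
  fun j => ∑ k, P k j * Nbar b d k

/-- M = P·diag(β)·diag(Ñ)⁻¹·Pᵀ. -/
def Mmat {n : ℕ} (P : Matrix (Fin n) (Fin n) ℝ) (β b d : Fin n → ℝ) :
    Matrix (Fin n) (Fin n) ℝ :=
  P * Matrix.diagonal β * Matrix.diagonal (fun j => (Ntil P b d j)⁻¹) * Pᵀ

/-- F = diag(N̄)·M. -/
def Fmat {n : ℕ} (P : Matrix (Fin n) (Fin n) ℝ) (β b d : Fin n → ℝ) :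
    Matrix (Fin n) (Fin n) ℝ :=
  Matrix.diagonal (Nbar b d) * Mmat P β b d

/-- V = −diag(dᵢ + γᵢ). -/
def Vmat {n : ℕ} (d γ : Fin n → ℝ) : Matrix (Fin n) (Fin n) ℝ :=
  -Matrix.diagonal (fun i => d i + γ i)

/-- The SIS vector field G(I) = diag(N̄ − I)·M·I + V·I, written componentwise. -/
def Gfield {n : ℕ} (P : Matrix (Fin n) (Fin n) ℝ) (β b d γ : Fin n → ℝ)
    (I : Fin n → ℝ) : Fin n → ℝ :=
  fun i => (Nbar b d i - I i) * (Mmat P β b d).mulVec I i - (d i + γ i) * I i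

/-- Ω = {I : 0 ≤ Iᵢ ≤ N̄ᵢ for all i}. -/
def OmegaSet {n : ℕ} (b d : Fin n → ℝ) : Set (Fin n → ℝ) :=
  {I | ∀ i, 0 ≤ I i ∧ I i ≤ Nbar b d i}

/-- The basic reproduction number R₀ = ρ(−F·V⁻¹). -/
def R0 {n : ℕ} (P : Matrix (Fin n) (Fin n) ℝ) (β b d γ : Fin n → ℝ) : ℝ :=
  specRad (-(Fmat P β b d * (Vmat d γ)⁻¹))

/-- `I : ℝ → ℝⁿ` is a solution of the SIS system on [0,∞). -/
def IsSol {n : ℕ} (P : Matrix (Fin n) (Fin n) ℝ) (β b d γ : Fin n → ℝ)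
    (I : ℝ → Fin n → ℝ) : Prop :=
  ∀ t ∈ Set.Ici (0 : ℝ), HasDerivWithinAt I (Gfield P β b d γ (I t)) (Set.Ici 0) t

/-- The Jacobian matrix DX(I) = diag(N̄ − I)·M + V − diag(M·I) of the SIS vector field. -/
def DXmat {n : ℕ} (P : Matrix (Fin n) (Fin n) ℝ) (β b d γ : Fin n → ℝ)
    (I : Fin n → ℝ) : Matrix (Fin n) (Fin n) ℝ :=
  Matrix.diagonal (fun i => Nbar b d i - I i) * Mmat P β b d + Vmat d γ -
    Matrix.diagonal ((Mmat P β b d).mulVec I)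

/-- The isolated-patch reproduction number R₀ⁱ = βᵢ/(dᵢ + γᵢ). -/
def R0i {n : ℕ} (β d γ : Fin n → ℝ) (i : Fin n) : ℝ := β i / (d i + γ i)

/-- The patch reproduction number R₀ⁱ(P) = (∑ⱼ βⱼ p_{ij}² N̄ᵢ / Ñⱼ)/(dᵢ + γᵢ). -/
def R0iP {n : ℕ} (P : Matrix (Fin n) (Fin n) ℝ) (β b d γ : Fin n → ℝ) (i : Fin n) : ℝ :=
  (∑ j, β j * (P i j) ^ 2 * Nbar b d i / Ntil P b d j) / (d i + γ i)

/-- Condition H for patch i: whenever p_{ij} > 0, no other patch k ≠ i visits patch j. -/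
def CondH {n : ℕ} (P : Matrix (Fin n) (Fin n) ℝ) (i : Fin n) : Prop :=
  ∀ j, 0 < P i j → ∀ k, k ≠ i → P k j = 0


lemma mulVec_expand {n : ℕ} (P : Matrix (Fin n) (Fin n) ℝ) (β g v : Fin n → ℝ) (i : Fin n) :
    (P * Matrix.diagonal β * Matrix.diagonal g * Pᵀ).mulVec v i
      = ∑ j, P i j * (β j * g j * (∑ k, P k j * v k)) := by
  simp [Matrix.mulVec, Matrix.mul_apply, dotProduct, Matrix.diagonal, Finset.sum_mul,
    Finset.mul_sum, Matrix.transpose_apply]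
  rw [Finset.sum_comm]
  apply Finset.sum_congr rfl
  intro j _
  apply Finset.sum_congr rfl
  intro k _
  ring

/-- at a positive equilibrium Ī with (F + V)·Ī = diag(Ī)·M·Ī, the
Jacobian satisfies DX(Ī)·Ī = −diag(M·Ī)·Ī, whose components −(M·Ī)ᵢ·Īᵢ are all
strictly negative. -/
theorem sis_jacobian_at_endemic_equilibrium
    {n : ℕ} (hn : 1 ≤ n) (b d γ β : Fin n → ℝ) (P : Matrix (Fin n) (Fin n) ℝ)
    (hb : ∀ i, 0 < b i) (hd : ∀ i, 0 < d i) (hγ : ∀ i, 0 ≤ γ i) (hβ : ∀ j, 0 < β j)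
    (hP0 : ∀ i j, 0 ≤ P i j) (hP1 : ∀ i j, P i j ≤ 1)
    (hrow : ∀ i, ∑ j, P i j = 1) (hcol : ∀ j, ∃ k, 0 < P k j)
    (Ibar : Fin n → ℝ) (hpos : ∀ i, 0 < Ibar i)
    (heq : (Fmat P β b d + Vmat d γ).mulVec Ibar =
      fun i => Ibar i * (Mmat P β b d).mulVec Ibar i) :
    ((DXmat P β b d γ Ibar).mulVec Ibar =
      fun i => -((Mmat P β b d).mulVec Ibar i * Ibar i)) ∧
    ∀ i, (DXmat P β b d γ Ibar).mulVec Ibar i < 0 := by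
    classical
  set M := Mmat P β b d with hM
  set m := M.mulVec Ibar with hm
  have hNtil : ∀ j, 0 < Ntil P b d j := by
    intro j
    obtain ⟨k, hk⟩ := hcol j
    exact Finset.sum_pos' (fun l _ => mul_nonneg (hP0 l j)
      (le_of_lt (div_pos (hb l) (hd l)))) ⟨k, Finset.mem_univ k,
      mul_pos hk (div_pos (hb k) (hd k))⟩
  have hmpos : ∀ i, 0 < m i := by
    intro i
    have hrepr : m i = ∑ j, P i j * (β j * (Ntil P b d j)⁻¹ * (∑ k, P k j * Ibar k)) := by
      rw [hm, hM, Mmat, mulVec_expand]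
    obtain ⟨j0, hj0⟩ : ∃ j, 0 < P i j := by
      by_contra h
      push_neg at h
      have : ∑ j, P i j = 0 := Finset.sum_eq_zero fun j _ => le_antisymm (h j) (hP0 i j)
      rw [hrow i] at this; norm_num at this
    rw [hrepr]
    refine Finset.sum_pos' (fun j _ => mul_nonneg (hP0 i j) (mul_nonneg
      (mul_nonneg (hβ j).le (inv_nonneg.mpr (hNtil j).le))
      (Finset.sum_nonneg fun k _ => mul_nonneg (hP0 k j) (hpos k).le)))
      ⟨j0, Finset.mem_univ j0, ?_⟩
    refine mul_pos hj0 (mul_pos (mul_pos (hβ j0) (inv_pos.mpr (hNtil j0))) ?_)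
    refine Finset.sum_pos' (fun k _ => mul_nonneg (hP0 k j0) (hpos k).le)
      ⟨i, Finset.mem_univ i, mul_pos hj0 (hpos i)⟩
  have key : (DXmat P β b d γ Ibar).mulVec Ibar =
      fun i => -(m i * Ibar i) := by
    funext i
    have hDX : (DXmat P β b d γ Ibar).mulVec Ibar i
        = (Nbar b d i - Ibar i) * m i - (d i + γ i) * Ibar i - m i * Ibar i := by
      rw [DXmat, Matrix.sub_mulVec, Matrix.add_mulVec]
      simp [Matrix.mulVec, Matrix.mul_apply, dotProduct, Matrix.diagonal, Vmat,
        Finset.mul_sum, Finset.sum_mul, hm, hM, Pi.sub_apply, Pi.add_apply]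
      ring_nf
    have heqi := congrFun heq i
    rw [Matrix.add_mulVec] at heqi
    simp only [Pi.add_apply] at heqi
    have hF : (Fmat P β b d).mulVec Ibar i = Nbar b d i * m i := by
      rw [Fmat]
      simp [Matrix.mulVec, Matrix.mul_apply, dotProduct, Matrix.diagonal, hm, hM,
        Finset.mul_sum, mul_assoc]
    have hV : (Vmat d γ).mulVec Ibar i = -((d i + γ i) * Ibar i) := by
      simp [Vmat, Matrix.mulVec, dotProduct, Matrix.diagonal, Finset.sum_ite_eq]
    have heqi' : Nbar b d i * m i - (d i + γ i) * Ibar i = Ibar i * m i := by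
      rw [hF, hV] at heqi
      linarith [heqi]
    rw [hDX]; nlinarith [heqi']
  exact ⟨key, fun i => by rw [key]; exact neg_neg_iff_pos.mpr (mul_pos (hmpos i) (hpos i))⟩
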